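/- Let ν₁, ν₂, ν₄, ν₅, ν₆, ν₇, a₁, a₂, b₁, b₂ ∈ ℝ and define f, g : (0,∞) → ℝ by f(r) = 1 + a₁/r + a₂/r² and g(r) = 1 + b₁/r + b₂/r². Then the residual function r ↦ ν₁f''(r) + ν₂g''(r) + (1/r)(2ν₁f'(r) + (2ν₂+ν₄)g'(r)) − ν₅f'(r)² − ν₆g'(r)² − ν₇f'(r)g'(r) is O(r^{−5}) as r → ∞ if and only if ν₄b₁ = 0 and 2ν₁a₂ + 2ν₂b₂ − 2ν₄b₂ = ν₅a₁² + ν₆b₁² + ν₇a₁b₁. -/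

import Mathlib

open Filter Asymptotics


lemma hasDerivAt_aux1 (c₁ c₂ : ℝ) {r : ℝ} (hr : r ≠ 0) :
    HasDerivAt (fun x : ℝ => 1 + c₁ / x + c₂ / x ^ 2)
      (-c₁ / r ^ 2 - 2 * c₂ / r ^ 3) r := by
  have h1 : HasDerivAt (fun x : ℝ => x⁻¹) (-(r ^ 2)⁻¹) r := hasDerivAt_inv hr
  have h2 : HasDerivAt (fun x : ℝ => (x ^ 2)⁻¹) (-(2 * r) / (r ^ 2) ^ 2) r := by
    simpa using (hasDerivAt_pow 2 r).fun_inv (pow_ne_zero 2 hr)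
  have h := ((h1.const_mul c₁).const_add 1).fun_add (h2.const_mul c₂)
  have hfun : (fun x : ℝ => 1 + c₁ * x⁻¹ + c₂ * (x ^ 2)⁻¹)
      = fun x : ℝ => 1 + c₁ / x + c₂ / x ^ 2 := by
    funext x; rw [div_eq_mul_inv, div_eq_mul_inv]
  rw [hfun] at h
  refine h.congr_deriv ?_
  field_simp
  ring

lemma hasDerivAt_aux2 (c₁ c₂ : ℝ) {r : ℝ} (hr : r ≠ 0) :
    HasDerivAt (fun x : ℝ => -c₁ / x ^ 2 - 2 * c₂ / x ^ 3)
      (2 * c₁ / r ^ 3 + 6 * c₂ / r ^ 4) r := by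
  have h2 : HasDerivAt (fun x : ℝ => (x ^ 2)⁻¹) (-(2 * r) / (r ^ 2) ^ 2) r := by
    simpa using (hasDerivAt_pow 2 r).fun_inv (pow_ne_zero 2 hr)
  have h3 : HasDerivAt (fun x : ℝ => (x ^ 3)⁻¹) (-(3 * r ^ 2) / (r ^ 3) ^ 2) r := by
    simpa using (hasDerivAt_pow 3 r).fun_inv (pow_ne_zero 3 hr)
  have h := (h2.const_mul (-c₁)).fun_add (h3.const_mul (-(2 * c₂)))
  have hfun : (fun x : ℝ => -c₁ * (x ^ 2)⁻¹ + -(2 * c₂) * (x ^ 3)⁻¹)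
      = fun x : ℝ => -c₁ / x ^ 2 - 2 * c₂ / x ^ 3 := by
    funext x; rw [div_eq_mul_inv, div_eq_mul_inv]; ring
  rw [hfun] at h
  refine h.congr_deriv ?_
  field_simp
  ring

lemma deriv_formulas (c₁ c₂ : ℝ) (f : ℝ → ℝ)
    (hf : ∀ r : ℝ, 0 < r → f r = 1 + c₁ / r + c₂ / r ^ 2) :
    ∀ r : ℝ, 0 < r →
      deriv f r = -c₁ / r ^ 2 - 2 * c₂ / r ^ 3 ∧
      deriv (deriv f) r = 2 * c₁ / r ^ 3 + 6 * c₂ / r ^ 4 := by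
  have hd1 : ∀ r : ℝ, 0 < r → deriv f r = -c₁ / r ^ 2 - 2 * c₂ / r ^ 3 := by
    intro r hr
    have heq : f =ᶠ[nhds r] fun x : ℝ => 1 + c₁ / x + c₂ / x ^ 2 := by
      filter_upwards [Ioi_mem_nhds hr] with x hx
      exact hf x hx
    rw [heq.deriv_eq]
    exact (hasDerivAt_aux1 c₁ c₂ hr.ne').deriv
  intro r hr
  refine ⟨hd1 r hr, ?_⟩
  have heq : deriv f =ᶠ[nhds r] fun x : ℝ => -c₁ / x ^ 2 - 2 * c₂ / x ^ 3 := by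
    filter_upwards [Ioi_mem_nhds hr] with x hx
    exact hd1 x hx
  rw [heq.deriv_eq]
  exact (hasDerivAt_aux2 c₁ c₂ hr.ne').deriv

lemma zpow_bigO {m n : ℤ} (h : m ≤ n) :
    (fun r : ℝ => r ^ m) =O[atTop] fun r : ℝ => r ^ n := by
  refine IsBigO.of_bound 1 ?_
  filter_upwards [eventually_ge_atTop (1 : ℝ)] with r hr
  have hr0 : (0 : ℝ) < r := lt_of_lt_of_le one_pos hr
  rw [Real.norm_eq_abs, Real.norm_eq_abs, one_mul,
    abs_of_pos (zpow_pos hr0 m), abs_of_pos (zpow_pos hr0 n)]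
  exact zpow_le_zpow_right₀ hr h

lemma key_iff (A B : ℝ) :
    (fun r : ℝ => A * r ^ (-3 : ℤ) + B * r ^ (-4 : ℤ)) =O[atTop]
      (fun r : ℝ => r ^ (-5 : ℤ)) ↔ A = 0 ∧ B = 0 := by
  constructor
  · intro hO
    have hA : A = 0 := by
      have h3 := hO.mul (isBigO_refl (fun r : ℝ => r ^ (3 : ℤ)) atTop)
      have hl : (fun r : ℝ => (A * r ^ (-3 : ℤ) + B * r ^ (-4 : ℤ)) * r ^ (3 : ℤ))
          =ᶠ[atTop] fun r : ℝ => A + B * r⁻¹ := by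
        filter_upwards [eventually_gt_atTop (0 : ℝ)] with r hr
        have h0 : r ≠ 0 := hr.ne'
        have e1 : r ^ (-3 : ℤ) * r ^ (3 : ℤ) = 1 := by
          rw [← zpow_add₀ h0]; norm_num
        have e2 : r ^ (-4 : ℤ) * r ^ (3 : ℤ) = r⁻¹ := by
          rw [← zpow_add₀ h0]; norm_num
        calc (A * r ^ (-3 : ℤ) + B * r ^ (-4 : ℤ)) * r ^ (3 : ℤ)
            = A * (r ^ (-3 : ℤ) * r ^ (3 : ℤ)) + B * (r ^ (-4 : ℤ) * r ^ (3 : ℤ)) := by ring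
          _ = A + B * r⁻¹ := by rw [e1, e2]; ring
      have hrr : (fun r : ℝ => r ^ (-5 : ℤ) * r ^ (3 : ℤ))
          =ᶠ[atTop] fun r : ℝ => r ^ (-2 : ℤ) := by
        filter_upwards [eventually_gt_atTop (0 : ℝ)] with r hr
        rw [← zpow_add₀ hr.ne']
        norm_num
      have h4 : (fun r : ℝ => A + B * r⁻¹) =O[atTop] fun r : ℝ => r ^ (-2 : ℤ) :=
        ((isBigO_congr hl hrr).mp h3)
      have ht0 : Tendsto (fun r : ℝ => r ^ (-2 : ℤ)) atTop (nhds 0) :=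
        tendsto_zpow_atTop_zero (by norm_num)
      have ht : Tendsto (fun r : ℝ => A + B * r⁻¹) atTop (nhds 0) :=
        h4.trans_tendsto ht0
      have ht2 : Tendsto (fun r : ℝ => A + B * r⁻¹) atTop (nhds A) := by
        simpa using (tendsto_const_nhds (x := A)).add
          (tendsto_inv_atTop_zero.const_mul B)
      exact (tendsto_nhds_unique ht2 ht)
    subst hA
    have hO' : (fun r : ℝ => B * r ^ (-4 : ℤ)) =O[atTop] fun r : ℝ => r ^ (-5 : ℤ) := by
      refine hO.congr' ?_ (EventuallyEq.refl _ _)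
      filter_upwards with r; ring
    have h3 := hO'.mul (isBigO_refl (fun r : ℝ => r ^ (4 : ℤ)) atTop)
    have hl : (fun r : ℝ => B * r ^ (-4 : ℤ) * r ^ (4 : ℤ)) =ᶠ[atTop] fun _ : ℝ => B := by
      filter_upwards [eventually_gt_atTop (0 : ℝ)] with r hr
      have e2 : r ^ (-4 : ℤ) * r ^ (4 : ℤ) = 1 := by
        rw [← zpow_add₀ hr.ne']; norm_num
      calc B * r ^ (-4 : ℤ) * r ^ (4 : ℤ) = B * (r ^ (-4 : ℤ) * r ^ (4 : ℤ)) := by ring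
        _ = B := by rw [e2]; ring
    have hrr : (fun r : ℝ => r ^ (-5 : ℤ) * r ^ (4 : ℤ))
        =ᶠ[atTop] fun r : ℝ => r ^ (-1 : ℤ) := by
      filter_upwards [eventually_gt_atTop (0 : ℝ)] with r hr
      rw [← zpow_add₀ hr.ne']
      norm_num
    have h4 : (fun _ : ℝ => B) =O[atTop] fun r : ℝ => r ^ (-1 : ℤ) :=
      (isBigO_congr hl hrr).mp h3
    have ht : Tendsto (fun _ : ℝ => B) atTop (nhds 0) :=
      h4.trans_tendsto (tendsto_zpow_atTop_zero (by norm_num))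
    exact ⟨rfl, tendsto_nhds_unique tendsto_const_nhds ht⟩
  · rintro ⟨hA, hB⟩
    simp only [hA, hB, zero_mul, add_zero]
    exact isBigO_zero _ _


/-- for `f(r) = 1 + a₁/r + a₂/r²` and `g(r) = 1 + b₁/r + b₂/r²` on
`(0,∞)`, the residual of the second radial equation is `O(r^{−5})` as `r → ∞` iff
`ν₄b₁ = 0` and `2ν₁a₂ + 2ν₂b₂ − 2ν₄b₂ = ν₅a₁² + ν₆b₁² + ν₇a₁b₁`. -/
theorem second_radial_equation_asymptotics
    (ν₁ ν₂ ν₄ ν₅ ν₆ ν₇ a₁ a₂ b₁ b₂ : ℝ) (f g : ℝ → ℝ)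
    (hf : ∀ r : ℝ, 0 < r → f r = 1 + a₁ / r + a₂ / r ^ 2)
    (hg : ∀ r : ℝ, 0 < r → g r = 1 + b₁ / r + b₂ / r ^ 2) :
    (fun r : ℝ =>
        ν₁ * deriv (deriv f) r + ν₂ * deriv (deriv g) r +
          (1 / r) * (2 * ν₁ * deriv f r + (2 * ν₂ + ν₄) * deriv g r) -
          ν₅ * (deriv f r) ^ 2 - ν₆ * (deriv g r) ^ 2 -
          ν₇ * (deriv f r * deriv g r))
      =O[atTop] (fun r : ℝ => r ^ (-5 : ℤ)) ↔
    (ν₄ * b₁ = 0 ∧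
      2 * ν₁ * a₂ + 2 * ν₂ * b₂ - 2 * ν₄ * b₂ =
        ν₅ * a₁ ^ 2 + ν₆ * b₁ ^ 2 + ν₇ * (a₁ * b₁)) := by
  set A : ℝ := -(ν₄ * b₁) with hAdef
  set B : ℝ := 2 * ν₁ * a₂ + 2 * ν₂ * b₂ - 2 * ν₄ * b₂ -
    (ν₅ * a₁ ^ 2 + ν₆ * b₁ ^ 2 + ν₇ * (a₁ * b₁)) with hBdef
  set C : ℝ := -(4 * ν₅ * a₁ * a₂ + 4 * ν₆ * b₁ * b₂ + 2 * ν₇ * (a₁ * b₂ + a₂ * b₁))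
    with hCdef
  set D : ℝ := -(4 * ν₅ * a₂ ^ 2 + 4 * ν₆ * b₂ ^ 2 + 4 * ν₇ * (a₂ * b₂)) with hDdef
  have heq : (fun r : ℝ =>
        ν₁ * deriv (deriv f) r + ν₂ * deriv (deriv g) r +
          (1 / r) * (2 * ν₁ * deriv f r + (2 * ν₂ + ν₄) * deriv g r) -
          ν₅ * (deriv f r) ^ 2 - ν₆ * (deriv g r) ^ 2 -
          ν₇ * (deriv f r * deriv g r))
      =ᶠ[atTop] fun r : ℝ =>
        A * r ^ (-3 : ℤ) + B * r ^ (-4 : ℤ) + (C * r ^ (-5 : ℤ) + D * r ^ (-6 : ℤ)) := by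
    filter_upwards [eventually_gt_atTop (0 : ℝ)] with r hr
    obtain ⟨hf1, hf2⟩ := deriv_formulas a₁ a₂ f hf r hr
    obtain ⟨hg1, hg2⟩ := deriv_formulas b₁ b₂ g hg r hr
    rw [hf1, hf2, hg1, hg2]
    have h0 : r ≠ 0 := hr.ne'
    have e3 : r ^ (-3 : ℤ) = (r ^ 3)⁻¹ := by
      rw [zpow_neg]; norm_cast
    have e4 : r ^ (-4 : ℤ) = (r ^ 4)⁻¹ := by
      rw [zpow_neg]; norm_cast
    have e5 : r ^ (-5 : ℤ) = (r ^ 5)⁻¹ := by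
      rw [zpow_neg]; norm_cast
    have e6 : r ^ (-6 : ℤ) = (r ^ 6)⁻¹ := by
      rw [zpow_neg]; norm_cast
    rw [e3, e4, e5, e6, hAdef, hBdef, hCdef, hDdef]
    field_simp
    ring
  have tail : (fun r : ℝ => C * r ^ (-5 : ℤ) + D * r ^ (-6 : ℤ))
      =O[atTop] fun r : ℝ => r ^ (-5 : ℤ) :=
    ((isBigO_refl _ atTop).const_mul_left C).add
      ((zpow_bigO (by norm_num)).const_mul_left D)
  rw [isBigO_congr heq (EventuallyEq.refl _ _)]
  constructor
  · intro h
    have hhead : (fun r : ℝ => A * r ^ (-3 : ℤ) + B * r ^ (-4 : ℤ))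
        =O[atTop] fun r : ℝ => r ^ (-5 : ℤ) := by
      refine (h.sub tail).congr' ?_ (EventuallyEq.refl _ _)
      filter_upwards with r
      ring
    obtain ⟨h1, h2⟩ := (key_iff A B).mp hhead
    rw [hAdef] at h1
    rw [hBdef] at h2
    exact ⟨by linarith, by linarith⟩
  · rintro ⟨h1, h2⟩
    have hA0 : A = 0 := by rw [hAdef]; linarith
    have hB0 : B = 0 := by rw [hBdef]; linarith
    exact ((key_iff A B).mpr ⟨hA0, hB0⟩).add tail
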